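/- Let N ≥ 1, let C : Fin N → MvPolynomial (Fin N) ℝ be such that each C_k is a homogeneous polynomial of degree 3 of the form A_k − X_k·B_k with A_k, B_k having nonnegative coefficients and the coefficient of X_k³ in A_k being zero, with ∑_k C_k = 0, and let y : [0, ∞) → ℝ^N be a differentiable solution of y′ = C(y) with y_k(t) ≥ 0 and ∑_k y_k(t) = 1 for all t, with y(0) equal to a standard basis vector, and with y_1(t) → α as t → ∞ for a designated coordinate 1. Then there exist a polynomial vector field D indexed by pairs (i,j) ∈ Fin N × Fin N over the variables Z_{(i,j)} and a differentiable function z : [0, ∞) → ℝ^{N×N} with z_{(i,j)}(t) = y_i(t)·y_j(t), such that: (1) each D_{(i,j)} is a homogeneous polynomial of degree 2 of the form P_{(i,j)} − Z_{(i,j)}·Q_{(i,j)} where P_{(i,j)} is a homogeneous degree-2 polynomial with nonnegative coefficients whose coefficient of Z_{(i,j)}² is zero and Q_{(i,j)} is a homogeneous degree-1 polynomial with nonnegative coefficients; (2) ∑_{(i,j)} D_{(i,j)} = 0; (3) z′(t) = D(z(t)) for all t, z(0) is a standard basis vector, z_{(i,j)}(t) ≥ 0 and ∑_{(i,j)} z_{(i,j)}(t)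 = 1 for all t; and (4) ∑_{j} z_{(1,j)}(t) → α as t → ∞. -/

import Mathlib

open MvPolynomial Filter

namespace Stage3
open scoped Classical



variable {N : ℕ}

/-- least element of the support, with default. -/
noncomputable def m0 (d0 : Fin N) (f : Fin N →₀ ℕ) : Fin N :=
  if h : f.support.Nonempty then f.support.min' h else d0

/-- greatest element of the support, with default. -/
noncomputable def mx (d0 : Fin N) (f : Fin N →₀ ℕ) : Fin N :=
  if h : f.support.Nonempty then f.support.max' h else d0

lemma m0_mem (d0 : Fin N) {f : Fin N →₀ ℕ} (h : f ≠ 0) : m0 d0 f ∈ f.support := by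
  have hs : f.support.Nonempty := Finsupp.support_nonempty_iff.2 h
  rw [m0, dif_pos hs]; exact f.support.min'_mem hs

lemma mx_mem (d0 : Fin N) {f : Fin N →₀ ℕ} (h : f ≠ 0) : mx d0 f ∈ f.support := by
  have hs : f.support.Nonempty := Finsupp.support_nonempty_iff.2 h
  rw [mx, dif_pos hs]; exact f.support.max'_mem hs

lemma m0_le (d0 : Fin N) {f : Fin N →₀ ℕ} {a : Fin N} (h : a ∈ f.support) : m0 d0 f ≤ a := by
  have hs : f.support.Nonempty := ⟨a, h⟩
  rw [m0, dif_pos hs]; exact f.support.min'_le a h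

lemma le_mx (d0 : Fin N) {f : Fin N →₀ ℕ} {a : Fin N} (h : a ∈ f.support) : a ≤ mx d0 f := by
  have hs : f.support.Nonempty := ⟨a, h⟩
  rw [mx, dif_pos hs]; exact f.support.le_max' a h

lemma m0_le_mx (d0 : Fin N) {f : Fin N →₀ ℕ} (h : f ≠ 0) : m0 d0 f ≤ mx d0 f :=
  le_mx d0 (m0_mem d0 h)

lemma m0_single (d0 : Fin N) {k : Fin N} {n : ℕ} (hn : n ≠ 0) :
    m0 d0 (Finsupp.single k n) = k := by
  have h : (Finsupp.single k n).support = {k} := Finsupp.support_single_ne_zero k hn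
  have hne : (Finsupp.single k n) ≠ 0 := by
    simp [Finsupp.single_eq_zero, hn]
  have := m0_mem d0 hne
  rw [h, Finset.mem_singleton] at this
  exact this

lemma mx_single (d0 : Fin N) {k : Fin N} {n : ℕ} (hn : n ≠ 0) :
    mx d0 (Finsupp.single k n) = k := by
  have h : (Finsupp.single k n).support = {k} := Finsupp.support_single_ne_zero k hn
  have hne : (Finsupp.single k n) ≠ 0 := by
    simp [Finsupp.single_eq_zero, hn]
  have := mx_mem d0 hne
  rw [h, Finset.mem_singleton] at this
  exact this

lemma single_add_sub {f : Fin N →₀ ℕ} {a : Fin N} (h : a ∈ f.support) :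
    Finsupp.single a 1 + (f - Finsupp.single a 1) = f := by
  have ha : f a ≠ 0 := Finsupp.mem_support_iff.1 h
  ext x
  by_cases hx : x = a
  · subst hx
    simp only [Finsupp.add_apply, Finsupp.tsub_apply, Finsupp.single_eq_same]
    omega
  · simp [Finsupp.add_apply, Finsupp.tsub_apply, Finsupp.single_eq_of_ne' (Ne.symm hx)]

lemma degree_add {σ : Type*} (f g : σ →₀ ℕ) : (f + g).degree = f.degree + g.degree := by
  simp [Finsupp.degree_eq_weight_one, map_add]

lemma degree_single {σ : Type*} (a : σ) (n : ℕ) : (Finsupp.single a n).degree = n := by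
  rcases Nat.eq_zero_or_pos n with h | h
  · simp [h, Finsupp.degree]
  · exact Finsupp.degree_single a n



variable {N : ℕ}

lemma deg2_struct (d0 : Fin N) {f : Fin N →₀ ℕ} (hf : f.degree = 2) :
    f = Finsupp.single (m0 d0 f) 1 + Finsupp.single (mx d0 f) 1 := by
  have hne : f ≠ 0 := by
    intro h; rw [h, map_zero] at hf; omega
  set a := m0 d0 f with ha
  set b := mx d0 f with hb
  have hma : a ∈ f.support := m0_mem d0 hne
  have hmb : b ∈ f.support := mx_mem d0 hne
  have hfa : f a ≠ 0 := Finsupp.mem_support_iff.1 hma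
  have hfb : f b ≠ 0 := Finsupp.mem_support_iff.1 hmb
  by_cases hab : a = b
  · -- support is a singleton
    have hsub : f.support ⊆ {a} := by
      intro x hx
      have h1 := m0_le d0 hx
      have h2 := le_mx d0 hx
      rw [← ha] at h1; rw [← hb, ← hab] at h2
      simp [le_antisymm h2 h1]
    have hfs : f = Finsupp.single a (f a) := Finsupp.support_subset_singleton.1 hsub
    have : f a = 2 := by
      rw [hfs, degree_single] at hf; exact hf
    rw [hfs, this, ← hab]
    rw [← Finsupp.single_add]
  · -- two distinct elements
    set g := Finsupp.single a 1 + Finsupp.single b 1 with hg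
    have hglef : ∀ x, g x ≤ f x := by
      intro x
      simp only [hg, Finsupp.add_apply, Finsupp.single_apply]
      split_ifs with u v v
      · exact absurd (u.trans v.symm) hab
      · subst u; omega
      · subst v; omega
      · omega
    have hsplit : f = g + (f - g) := by
      ext x
      have := hglef x
      simp only [Finsupp.add_apply, Finsupp.tsub_apply]
      omega
    have hdg : g.degree = 2 := by
      rw [hg, degree_add, degree_single, degree_single]
    have hdfg : (f - g).degree = 0 := by
      have := degree_add g (f - g)
      rw [← hsplit, hf, hdg] at this
      omega
    have : f - g = 0 := (Finsupp.degree_eq_zero_iff _).1 hdfg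
    rw [hsplit, this, add_zero]

/-- remainder after removing one copy of the least element. -/
noncomputable def rem1 (d0 : Fin N) (d : Fin N →₀ ℕ) : Fin N →₀ ℕ :=
  d - Finsupp.single (m0 d0 d) 1

/-- the pair (min, max) of the support. -/
noncomputable def pr2 (d0 : Fin N) (f : Fin N →₀ ℕ) : Fin N × Fin N := (m0 d0 f, mx d0 f)

/-- canonical splitting of a degree-4 exponent into two pairs. -/
noncomputable def pr4 (d0 : Fin N) (d : Fin N →₀ ℕ) : (Fin N × Fin N) × (Fin N × Fin N) :=
  ((m0 d0 d, m0 d0 (rem1 d0 d)), pr2 d0 (rem1 d0 (rem1 d0 d)))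

lemma deg2_pr2 (d0 : Fin N) {f : Fin N →₀ ℕ} (hf : f.degree = 2) :
    f = Finsupp.single (pr2 d0 f).1 1 + Finsupp.single (pr2 d0 f).2 1 :=
  deg2_struct d0 hf

lemma rem1_spec (d0 : Fin N) {d : Fin N →₀ ℕ} (h : d ≠ 0) :
    Finsupp.single (m0 d0 d) 1 + rem1 d0 d = d :=
  single_add_sub (m0_mem d0 h)

lemma rem1_degree (d0 : Fin N) {d : Fin N →₀ ℕ} {n : ℕ} (h : d ≠ 0) (hd : d.degree = n + 1) :
    (rem1 d0 d).degree = n := by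
  have := degree_add (Finsupp.single (m0 d0 d) 1) (rem1 d0 d)
  rw [rem1_spec d0 h, hd, degree_single] at this
  omega

lemma deg4_struct (d0 : Fin N) {d : Fin N →₀ ℕ} (hd : d.degree = 4) :
    d = Finsupp.single (pr4 d0 d).1.1 1 + Finsupp.single (pr4 d0 d).1.2 1 +
        (Finsupp.single (pr4 d0 d).2.1 1 + Finsupp.single (pr4 d0 d).2.2 1) := by
  have hne : d ≠ 0 := by intro h; rw [h, map_zero] at hd; omega
  have h1 := rem1_spec d0 hne
  have hd1 : (rem1 d0 d).degree = 3 := rem1_degree d0 hne hd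
  have hne1 : rem1 d0 d ≠ 0 := by
    intro h; rw [h, map_zero] at hd1; omega
  have h2 := rem1_spec d0 hne1
  have hd2 : (rem1 d0 (rem1 d0 d)).degree = 2 := rem1_degree d0 hne1 hd1
  have h3 := deg2_pr2 d0 hd2
  calc d = Finsupp.single (m0 d0 d) 1 + rem1 d0 d := h1.symm
    _ = Finsupp.single (m0 d0 d) 1 +
        (Finsupp.single (m0 d0 (rem1 d0 d)) 1 + rem1 d0 (rem1 d0 d)) := by rw [h2]
    _ = _ := by rw [pr4]; rw [← h3]; dsimp only; abel

lemma pr4_selfpair (d0 : Fin N) {i j : Fin N}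
    (h : (pr4 d0 (Finsupp.single i 1 + Finsupp.single j 1 +
      (Finsupp.single i 1 + Finsupp.single j 1))).1 = (i, j)) : i = j := by
  by_cases hij : j = i
  · exact hij.symm
  set d := Finsupp.single i 1 + Finsupp.single j 1 +
      (Finsupp.single i 1 + Finsupp.single j 1) with hdd
  have hdi : d i = 2 := by
    simp [hdd, Finsupp.add_apply, Finsupp.single_eq_same, Finsupp.single_eq_of_ne' hij]
  have hdj : d j = 2 := by
    simp [hdd, Finsupp.add_apply, Finsupp.single_eq_same,
      Finsupp.single_eq_of_ne' (fun hh => hij hh.symm)]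
  have hmemi : i ∈ d.support := Finsupp.mem_support_iff.2 (by omega)
  have hmemj : j ∈ d.support := Finsupp.mem_support_iff.2 (by omega)
  have hm0 : m0 d0 d = i := by
    have := congrArg Prod.fst h; exact this
  have hm1 : m0 d0 (rem1 d0 d) = j := by
    have := congrArg Prod.snd h; exact this
  have hilej : i ≤ j := hm0 ▸ m0_le d0 hmemj
  have hri : (rem1 d0 d) i = 1 := by
    rw [rem1, hm0, Finsupp.tsub_apply, Finsupp.single_eq_same, hdi]
  have hmemri : i ∈ (rem1 d0 d).support := Finsupp.mem_support_iff.2 (by omega)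
  have hjlei : j ≤ i := hm1 ▸ m0_le d0 hmemri
  exact le_antisymm hilej hjlei

lemma pairsum_eq_single2 {α : Type*} [DecidableEq α] {x y c : α}
    (h : Finsupp.single x 1 + Finsupp.single y 1 = Finsupp.single c (2:ℕ)) : x = c ∧ y = c := by
  constructor
  · have hx := DFunLike.congr_fun h x
    simp only [Finsupp.add_apply, Finsupp.single_eq_same, Finsupp.single_apply] at hx
    by_cases hcx : c = x
    · exact hcx.symm
    · rw [if_neg hcx] at hx
      split_ifs at hx
  · have hy := DFunLike.congr_fun h y
    simp only [Finsupp.add_apply, Finsupp.single_eq_same, Finsupp.single_apply] at hy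
    by_cases hcy : c = y
    · exact hcy.symm
    · rw [if_neg hcy] at hy
      split_ifs at hy



variable {N : ℕ}

/-- exponent of the quadratic lift of a degree-4 exponent. -/
noncomputable def lamExp (d0 : Fin N) (dd : Fin N →₀ ℕ) : (Fin N × Fin N) →₀ ℕ :=
  Finsupp.single (pr4 d0 dd).1 1 + Finsupp.single (pr4 d0 dd).2 1

/-- quadratic lift of a (degree-4 homogeneous) polynomial. -/
noncomputable def lam (d0 : Fin N) (p : MvPolynomial (Fin N) ℝ) :
    MvPolynomial (Fin N × Fin N) ℝ :=
  ∑ dd ∈ p.support, monomial (lamExp d0 dd) (coeff dd p)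

/-- linear lift of a (degree-2 homogeneous) polynomial. -/
noncomputable def l1 (d0 : Fin N) (p : MvPolynomial (Fin N) ℝ) :
    MvPolynomial (Fin N × Fin N) ℝ :=
  ∑ b ∈ p.support, monomial (Finsupp.single (pr2 d0 b) 1) (coeff b p)

lemma lam_eq_sum_subset (d0 : Fin N) {p : MvPolynomial (Fin N) ℝ} {S : Finset (Fin N →₀ ℕ)}
    (h : p.support ⊆ S) :
    lam d0 p = ∑ dd ∈ S, monomial (lamExp d0 dd) (coeff dd p) := by
  rw [lam]
  refine Finset.sum_subset h fun dd _ hdd => ?_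
  rw [MvPolynomial.notMem_support_iff] at hdd
  rw [hdd, map_zero]

lemma lam_add (d0 : Fin N) (p q : MvPolynomial (Fin N) ℝ) :
    lam d0 (p + q) = lam d0 p + lam d0 q := by
  rw [lam_eq_sum_subset d0 (S := p.support ∪ q.support) (MvPolynomial.support_add),
    lam_eq_sum_subset d0 (S := p.support ∪ q.support) Finset.subset_union_left,
    lam_eq_sum_subset d0 (S := p.support ∪ q.support) Finset.subset_union_right,
    ← Finset.sum_add_distrib]
  refine Finset.sum_congr rfl fun dd _ => ?_
  rw [coeff_add, map_add]

lemma lam_monomial (d0 : Fin N) (dd : Fin N →₀ ℕ) (c : ℝ) :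
    lam d0 (monomial dd c) = monomial (lamExp d0 dd) c := by
  rw [lam_eq_sum_subset d0 (S := {dd}) support_monomial_subset, Finset.sum_singleton,
    coeff_monomial, if_pos rfl]

lemma lam_sum (d0 : Fin N) {β : Type*} (s : Finset β) (f : β → MvPolynomial (Fin N) ℝ) :
    lam d0 (∑ x ∈ s, f x) = ∑ x ∈ s, lam d0 (f x) := by
  classical
  induction s using Finset.induction_on with
  | empty => simp [lam]
  | insert _ _ h ih =>
      rw [Finset.sum_insert h, Finset.sum_insert h, lam_add, ih]

lemma monomial_add_mul {τ : Type*} [DecidableEq τ] (u v : τ →₀ ℕ) (c : ℝ) :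
    (monomial (u + v) c : MvPolynomial τ ℝ) = monomial u c * monomial v 1 := by
  rw [monomial_mul, mul_one]

lemma monomial_single_one_eq_X {τ : Type*} (a : τ) :
    (monomial (Finsupp.single a 1) (1:ℝ) : MvPolynomial τ ℝ) = X a := rfl

lemma eval_mon_pair {τ : Type*} [DecidableEq τ] (w : τ → ℝ) (a b : τ) (c : ℝ) :
    eval w (monomial (Finsupp.single a 1 + Finsupp.single b 1) c : MvPolynomial τ ℝ)
      = c * (w a * w b) := by
  rw [monomial_add_mul, monomial_single_one_eq_X, ← C_mul_X_eq_monomial]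
  simp [mul_assoc]

lemma eval_mon_quad {τ : Type*} [DecidableEq τ] (w : τ → ℝ) (a b u v : τ) (c : ℝ) :
    eval w (monomial (Finsupp.single a 1 + Finsupp.single b 1 +
      (Finsupp.single u 1 + Finsupp.single v 1)) c : MvPolynomial τ ℝ)
      = c * (w a * w b) * (w u * w v) := by
  rw [monomial_add_mul, eval_mul, eval_mon_pair, eval_mon_pair]
  ring

lemma eval_lam (d0 : Fin N) (y : Fin N → ℝ) {p : MvPolynomial (Fin N) ℝ}
    (hp : p.IsHomogeneous 4) :
    eval (fun kl : Fin N × Fin N => y kl.1 * y kl.2) (lam d0 p) = eval y p := by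
  conv_rhs => rw [as_sum p]
  rw [lam, map_sum, map_sum]
  refine Finset.sum_congr rfl fun dd hdd => ?_
  have hdeg : dd.degree = 4 := by
    rw [Finsupp.degree_eq_weight_one]
    exact hp (MvPolynomial.mem_support_iff.1 hdd)
  have hs := deg4_struct d0 hdeg
  rw [lamExp, eval_mon_pair]
  conv_rhs => rw [hs]
  rw [eval_mon_quad, ← hs]
  ring


variable {N : ℕ}

lemma eval_mon_single {τ : Type*} (w : τ → ℝ) (a : τ) (c : ℝ) :
    eval w (monomial (Finsupp.single a 1) c : MvPolynomial τ ℝ) = c * w a := by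
  rw [← C_mul_X_eq_monomial]; simp

lemma eval_l1 (d0 : Fin N) (y : Fin N → ℝ) {p : MvPolynomial (Fin N) ℝ}
    (hp : p.IsHomogeneous 2) :
    eval (fun kl : Fin N × Fin N => y kl.1 * y kl.2) (l1 d0 p) = eval y p := by
  conv_rhs => rw [as_sum p]
  rw [l1, map_sum, map_sum]
  refine Finset.sum_congr rfl fun b hb => ?_
  have hdeg : b.degree = 2 := by
    rw [Finsupp.degree_eq_weight_one]
    exact hp (MvPolynomial.mem_support_iff.1 hb)
  have hs := deg2_pr2 d0 hdeg
  rw [eval_mon_single]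
  conv_rhs => rw [hs]
  rw [eval_mon_pair, ← hs]

lemma lamExp_degree (d0 : Fin N) (dd : Fin N →₀ ℕ) : (lamExp d0 dd).degree = 2 := by
  rw [lamExp, degree_add, degree_single, degree_single]

lemma lam_isHomogeneous (d0 : Fin N) (p : MvPolynomial (Fin N) ℝ) :
    (lam d0 p).IsHomogeneous 2 := by
  rw [lam]
  exact IsHomogeneous.sum _ _ _ fun dd _ =>
    isHomogeneous_monomial _ (lamExp_degree d0 dd)

lemma l1_isHomogeneous (d0 : Fin N) (p : MvPolynomial (Fin N) ℝ) :
    (l1 d0 p).IsHomogeneous 1 := by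
  rw [l1]
  exact IsHomogeneous.sum _ _ _ fun b _ =>
    isHomogeneous_monomial _ (degree_single _ _)

lemma lam_coeff_nonneg (d0 : Fin N) {p : MvPolynomial (Fin N) ℝ}
    (hp : ∀ d, 0 ≤ p.coeff d) (e : (Fin N × Fin N) →₀ ℕ) : 0 ≤ (lam d0 p).coeff e := by
  rw [lam, MvPolynomial.coeff_sum]
  refine Finset.sum_nonneg fun dd _ => ?_
  rw [coeff_monomial]
  split_ifs
  · exact hp dd
  · exact le_rfl
  
lemma l1_coeff_nonneg (d0 : Fin N) {p : MvPolynomial (Fin N) ℝ}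
    (hp : ∀ d, 0 ≤ p.coeff d) (e : (Fin N × Fin N) →₀ ℕ) : 0 ≤ (l1 d0 p).coeff e := by
  rw [l1, MvPolynomial.coeff_sum]
  refine Finset.sum_nonneg fun b _ => ?_
  rw [coeff_monomial]
  split_ifs
  · exact hp b
  · exact le_rfl

lemma X_mul_monomial'' {τ : Type*} [DecidableEq τ] (a : τ) (m : τ →₀ ℕ) (c : ℝ) :
    (X a : MvPolynomial τ ℝ) * monomial m c = monomial (Finsupp.single a 1 + m) c := by
  rw [X, monomial_mul, one_mul]

lemma mul_XX_eq_sum (k j' : Fin N) (q : MvPolynomial (Fin N) ℝ) :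
    X k * X j' * q = ∑ b ∈ q.support,
      monomial (Finsupp.single k 1 + Finsupp.single j' 1 + b) (coeff b q) := by
  conv_lhs => rw [as_sum q]
  rw [Finset.mul_sum]
  refine Finset.sum_congr rfl fun b _ => ?_
  rw [mul_assoc, X_mul_monomial'', X_mul_monomial'', ← add_assoc]

lemma X_mul_l1 (d0 : Fin N) (a : Fin N × Fin N) (q : MvPolynomial (Fin N) ℝ) :
    X a * l1 d0 q = ∑ b ∈ q.support,
      monomial (Finsupp.single a 1 + Finsupp.single (pr2 d0 b) 1) (coeff b q) := by
  rw [l1, Finset.mul_sum]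
  refine Finset.sum_congr rfl fun b _ => ?_
  rw [X_mul_monomial'']


variable {N : ℕ}

/-- degree-4 exponent obtained by multiplying two variables into a degree-2 exponent. -/
noncomputable def dd3 (k j' : Fin N) (b : Fin N →₀ ℕ) : Fin N →₀ ℕ :=
  Finsupp.single k 1 + Finsupp.single j' 1 + b

lemma dd3_degree {k j' : Fin N} {b : Fin N →₀ ℕ} (hb : b.degree = 2) :
    (dd3 k j' b).degree = 4 := by
  rw [dd3, degree_add, degree_add, degree_single, degree_single, hb]

/-- the assignment condition for correction pieces. -/
def cnd (d0 k j' : Fin N) (b : Fin N →₀ ℕ) (ij : Fin N × Fin N) : Prop :=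
  (pr4 d0 (dd3 k j' b)).1 = ij ∧ ¬(j' = k ∧ b = Finsupp.single k 2)

noncomputable def posP (d0 : Fin N) (B : Fin N → MvPolynomial (Fin N) ℝ)
    (k j' : Fin N) (b : Fin N →₀ ℕ) : MvPolynomial (Fin N × Fin N) ℝ :=
  monomial (Finsupp.single ((k, j') : Fin N × Fin N) 1 + Finsupp.single (pr2 d0 b) 1)
    ((B k).coeff b) +
  monomial (Finsupp.single ((j', k) : Fin N × Fin N) 1 + Finsupp.single (pr2 d0 b) 1)
    ((B k).coeff b)

noncomputable def negQ (d0 : Fin N) (B : Fin N → MvPolynomial (Fin N) ℝ)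
    (k j' : Fin N) (b : Fin N →₀ ℕ) : MvPolynomial (Fin N × Fin N) ℝ :=
  monomial (Finsupp.single (pr4 d0 (dd3 k j' b)).2 1) (2 * (B k).coeff b)

open scoped Classical in
noncomputable def Ppoly (d0 : Fin N) (A B : Fin N → MvPolynomial (Fin N) ℝ)
    (ij : Fin N × Fin N) : MvPolynomial (Fin N × Fin N) ℝ :=
  lam d0 (A ij.1 * X ij.2 + X ij.1 * A ij.2) +
    ∑ k : Fin N, ∑ j' : Fin N, ∑ b ∈ (B k).support,
      if cnd d0 k j' b ij then posP d0 B k j' b else 0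

open scoped Classical in
noncomputable def Qpoly (d0 : Fin N) (B : Fin N → MvPolynomial (Fin N) ℝ)
    (ij : Fin N × Fin N) : MvPolynomial (Fin N × Fin N) ℝ :=
  (l1 d0 (B ij.1) + l1 d0 (B ij.2)) +
    ∑ k : Fin N, ∑ j' : Fin N, ∑ b ∈ (B k).support,
      if cnd d0 k j' b ij then negQ d0 B k j' b else 0

lemma mon_coeff_nonneg {τ : Type*} {u : τ →₀ ℕ} {c : ℝ} (hc : 0 ≤ c) (e : τ →₀ ℕ) :
    0 ≤ (monomial u c : MvPolynomial τ ℝ).coeff e := by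
  classical
  rw [coeff_monomial]; split_ifs; exact hc; exact le_rfl

lemma Ppoly_coeff_nonneg (d0 : Fin N) {A B : Fin N → MvPolynomial (Fin N) ℝ}
    (hA : ∀ k d, 0 ≤ (A k).coeff d) (hB : ∀ k d, 0 ≤ (B k).coeff d)
    (ij : Fin N × Fin N) (e : (Fin N × Fin N) →₀ ℕ) : 0 ≤ (Ppoly d0 A B ij).coeff e := by
  classical
  rw [Ppoly, coeff_add]
  have h1 : 0 ≤ (lam d0 (A ij.1 * X ij.2 + X ij.1 * A ij.2)).coeff e := by
    refine lam_coeff_nonneg d0 (fun d => ?_) e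
    rw [coeff_add]
    have hx : ∀ (p : MvPolynomial (Fin N) ℝ) (n : Fin N) (d : Fin N →₀ ℕ),
        (∀ d', 0 ≤ p.coeff d') → 0 ≤ (p * X n).coeff d := by
      intro p n d hp
      rw [coeff_mul_X']
      split_ifs
      · exact hp _
      · exact le_rfl
    have h2 := hx (A ij.1) ij.2 d (hA ij.1)
    have h3 : 0 ≤ (X ij.1 * A ij.2).coeff d := by
      rw [mul_comm]; exact hx (A ij.2) ij.1 d (hA ij.2)
    linarith
  have h2 : 0 ≤ (∑ k : Fin N, ∑ j' : Fin N, ∑ b ∈ (B k).support,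
      if cnd d0 k j' b ij then posP d0 B k j' b else 0).coeff e := by
    rw [MvPolynomial.coeff_sum]
    refine Finset.sum_nonneg fun k _ => ?_
    rw [MvPolynomial.coeff_sum]
    refine Finset.sum_nonneg fun j' _ => ?_
    rw [MvPolynomial.coeff_sum]
    refine Finset.sum_nonneg fun b _ => ?_
    split_ifs
    · rw [posP, coeff_add]
      have := mon_coeff_nonneg (u := Finsupp.single ((k, j') : Fin N × Fin N) 1 +
        Finsupp.single (pr2 d0 b) 1) (hB k b) e
      have := mon_coeff_nonneg (u := Finsupp.single ((j', k) : Fin N × Fin N) 1 +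
        Finsupp.single (pr2 d0 b) 1) (hB k b) e
      linarith
    · simp
  linarith

lemma Qpoly_coeff_nonneg (d0 : Fin N) {B : Fin N → MvPolynomial (Fin N) ℝ}
    (hB : ∀ k d, 0 ≤ (B k).coeff d)
    (ij : Fin N × Fin N) (e : (Fin N × Fin N) →₀ ℕ) : 0 ≤ (Qpoly d0 B ij).coeff e := by
  classical
  rw [Qpoly, coeff_add, coeff_add]
  have h1 := l1_coeff_nonneg d0 (hB ij.1) e
  have h2 := l1_coeff_nonneg d0 (hB ij.2) e
  have h3 : 0 ≤ (∑ k : Fin N, ∑ j' : Fin N, ∑ b ∈ (B k).support,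
      if cnd d0 k j' b ij then negQ d0 B k j' b else 0).coeff e := by
    rw [MvPolynomial.coeff_sum]
    refine Finset.sum_nonneg fun k _ => ?_
    rw [MvPolynomial.coeff_sum]
    refine Finset.sum_nonneg fun j' _ => ?_
    rw [MvPolynomial.coeff_sum]
    refine Finset.sum_nonneg fun b _ => ?_
    split_ifs
    · exact mon_coeff_nonneg (by have := hB k b; linarith) e
    · simp
  linarith

lemma Ppoly_isHomogeneous (d0 : Fin N) (A B : Fin N → MvPolynomial (Fin N) ℝ)
    (ij : Fin N × Fin N) : (Ppoly d0 A B ij).IsHomogeneous 2 := by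
  classical
  rw [Ppoly]
  refine (lam_isHomogeneous d0 _).add ?_
  refine IsHomogeneous.sum _ _ _ fun k _ => ?_
  refine IsHomogeneous.sum _ _ _ fun j' _ => ?_
  refine IsHomogeneous.sum _ _ _ fun b _ => ?_
  split_ifs
  · rw [posP]
    refine (isHomogeneous_monomial _ ?_).add (isHomogeneous_monomial _ ?_) <;>
      rw [degree_add, degree_single, degree_single]
  · exact isHomogeneous_zero _ _ _

lemma Qpoly_isHomogeneous (d0 : Fin N) (B : Fin N → MvPolynomial (Fin N) ℝ)
    (ij : Fin N × Fin N) : (Qpoly d0 B ij).IsHomogeneous 1 := by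
  classical
  rw [Qpoly]
  refine ((l1_isHomogeneous d0 _).add (l1_isHomogeneous d0 _)).add ?_
  refine IsHomogeneous.sum _ _ _ fun k _ => ?_
  refine IsHomogeneous.sum _ _ _ fun j' _ => ?_
  refine IsHomogeneous.sum _ _ _ fun b _ => ?_
  split_ifs
  · exact isHomogeneous_monomial _ (degree_single _ _)
  · exact isHomogeneous_zero _ _ _


lemma eval_mon3 {τ : Type*} [DecidableEq τ] (w : τ → ℝ) (k j' : τ) (m : τ →₀ ℕ) (c : ℝ) :
    eval w (monomial (Finsupp.single k 1 + Finsupp.single j' 1 + m) c : MvPolynomial τ ℝ)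
      = w k * w j' * eval w (monomial m c) := by
  have h : (monomial (Finsupp.single k 1 + Finsupp.single j' 1 + m) c : MvPolynomial τ ℝ)
      = monomial (Finsupp.single k 1 + Finsupp.single j' 1) 1 * monomial m c := by
    rw [monomial_mul, one_mul]
  rw [h, eval_mul, eval_mon_pair]
  ring

lemma single_sub_single {k : Fin N} {n : ℕ} :
    Finsupp.single k (n + 1) - Finsupp.single k 1 = Finsupp.single k n := by
  ext x
  rw [Finsupp.tsub_apply]
  rcases eq_or_ne k x with h | h
  · subst h; simp
  · simp [Finsupp.single_eq_of_ne h]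

lemma pr2_single2 (d0 k : Fin N) : pr2 d0 (Finsupp.single k 2) = (k, k) := by
  rw [pr2, m0_single d0 (by norm_num), mx_single d0 (by norm_num)]

lemma pr4_single4 (d0 k : Fin N) : pr4 d0 (Finsupp.single k 4) = ((k, k), (k, k)) := by
  have h1 : rem1 d0 (Finsupp.single k 4) = Finsupp.single k 3 := by
    rw [rem1, m0_single d0 (by norm_num)]
    exact single_sub_single (n := 3)
  have h2 : rem1 d0 (Finsupp.single k 3) = Finsupp.single k 2 := by
    rw [rem1, m0_single d0 (by norm_num)]
    exact single_sub_single (n := 2)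
  rw [pr4, h1, h2, m0_single d0 (by norm_num), m0_single d0 (by norm_num), pr2_single2]

lemma dd3_diag (k : Fin N) : dd3 k k (Finsupp.single k 2) = Finsupp.single k 4 := by
  rw [dd3, ← Finsupp.single_add, ← Finsupp.single_add]

lemma lamExp_single4 (d0 k : Fin N) :
    lamExp d0 (Finsupp.single k 4) =
      Finsupp.single ((k,k) : Fin N × Fin N) 1 + Finsupp.single ((k,k) : Fin N × Fin N) 1 := by
  rw [lamExp, pr4_single4]

lemma single_four (i : Fin N) :
    Finsupp.single i 1 + Finsupp.single i 1 + (Finsupp.single i 1 + Finsupp.single i 1)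
      = Finsupp.single i 4 := by
  ext x
  rcases eq_or_ne i x with h | h
  · subst h; simp
  · simp [Finsupp.single_eq_of_ne' h]

lemma Ppoly_coeff_single2 (d0 : Fin N) {A B : Fin N → MvPolynomial (Fin N) ℝ}
    (hAhom : ∀ k, (A k).IsHomogeneous 3) (hBhom : ∀ k, (B k).IsHomogeneous 2)
    (hAc : ∀ k, (A k).coeff (Finsupp.single k 3) = 0) (ij : Fin N × Fin N) :
    (Ppoly d0 A B ij).coeff (Finsupp.single ij 2) = 0 := by
  classical
  obtain ⟨i, j⟩ := ij
  rw [Ppoly, coeff_add]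
  have hq : (A i * X j + X i * A j).IsHomogeneous 4 := by
    have h1 : (A i * X j).IsHomogeneous 4 := by
      simpa using (hAhom i).mul (isHomogeneous_X ℝ j)
    have h2 : (X i * A j).IsHomogeneous 4 := by
      simpa using (isHomogeneous_X ℝ i).mul (hAhom j)
    exact h1.add h2
  have part1 : (lam d0 (A i * X j + X i * A j)).coeff
      (Finsupp.single ((i, j) : Fin N × Fin N) 2) = 0 := by
    rw [lam, MvPolynomial.coeff_sum]
    refine Finset.sum_eq_zero fun dd hdd => ?_
    rw [coeff_monomial]
    split_ifs with h
    swap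
    · rfl
    rw [lamExp] at h
    obtain ⟨h1, h2⟩ := pairsum_eq_single2 h
    have hdeg : dd.degree = 4 := by
      rw [Finsupp.degree_eq_weight_one]
      exact hq (MvPolynomial.mem_support_iff.1 hdd)
    have hs := deg4_struct d0 hdeg
    rw [h1, h2] at hs
    have hij : i = j := pr4_selfpair d0 (by rw [← hs]; exact h1)
    subst hij
    have hdd4 : dd = Finsupp.single i 4 := by rw [hs, single_four]
    subst hdd4
    have h34 : (Finsupp.single i 4 : Fin N →₀ ℕ) =
        Finsupp.single i 3 + Finsupp.single i 1 := by
      rw [← Finsupp.single_add]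
    rw [coeff_add]
    have hxa : X i * A i = A i * X i := mul_comm _ _
    rw [hxa, h34, coeff_mul_X, hAc i]
    norm_num
  have part2 : (∑ k : Fin N, ∑ j' : Fin N, ∑ b ∈ (B k).support,
      if cnd d0 k j' b (i, j) then posP d0 B k j' b else 0).coeff
        (Finsupp.single ((i, j) : Fin N × Fin N) 2) = 0 := by
    rw [MvPolynomial.coeff_sum]
    refine Finset.sum_eq_zero fun k _ => ?_
    rw [MvPolynomial.coeff_sum]
    refine Finset.sum_eq_zero fun j' _ => ?_
    rw [MvPolynomial.coeff_sum]
    refine Finset.sum_eq_zero fun b hb => ?_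
    split_ifs with hcnd
    swap
    · rfl
    have hbdeg : b.degree = 2 := by
      rw [Finsupp.degree_eq_weight_one]
      exact hBhom k (MvPolynomial.mem_support_iff.1 hb)
    have hbs := deg2_pr2 d0 hbdeg
    rw [posP, coeff_add, coeff_monomial, coeff_monomial]
    have main : ∀ u v : Fin N, (u, v) = ((i, j) : Fin N × Fin N) → u = k → v = j' ∨ v = k ∧ u = j' →
        True := fun _ _ _ _ _ => trivial
    clear main
    have case1 : (Finsupp.single ((k, j') : Fin N × Fin N) 1 +
        Finsupp.single (pr2 d0 b) 1 = Finsupp.single ((i, j) : Fin N × Fin N) 2) → False := by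
      intro h
      obtain ⟨hkj, hprb⟩ := pairsum_eq_single2 h
      have hk : k = i := congrArg Prod.fst hkj
      have hj' : j' = j := congrArg Prod.snd hkj
      have hb2 : b = Finsupp.single i 1 + Finsupp.single j 1 := by
        rw [hbs, hprb]
      have hdd : dd3 k j' b = Finsupp.single i 1 + Finsupp.single j 1 +
          (Finsupp.single i 1 + Finsupp.single j 1) := by
        rw [dd3, hb2, hk, hj']
      have hij : i = j := pr4_selfpair d0 (by rw [← hdd]; exact hcnd.1)
      subst hij
      refine hcnd.2 ⟨?_, ?_⟩
      · rw [hj', hk]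
      · rw [hb2, hk, ← Finsupp.single_add]
    have case2 : (Finsupp.single ((j', k) : Fin N × Fin N) 1 +
        Finsupp.single (pr2 d0 b) 1 = Finsupp.single ((i, j) : Fin N × Fin N) 2) → False := by
      intro h
      obtain ⟨hkj, hprb⟩ := pairsum_eq_single2 h
      have hj'2 : j' = i := congrArg Prod.fst hkj
      have hk2 : k = j := congrArg Prod.snd hkj
      have hb2 : b = Finsupp.single i 1 + Finsupp.single j 1 := by
        rw [hbs, hprb]
      have hdd : dd3 k j' b = Finsupp.single i 1 + Finsupp.single j 1 +
          (Finsupp.single i 1 + Finsupp.single j 1) := by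
        rw [dd3, hb2, hj'2, hk2]
        abel
      have hij : i = j := pr4_selfpair d0 (by rw [← hdd]; exact hcnd.1)
      subst hij
      refine hcnd.2 ⟨?_, ?_⟩
      · rw [hj'2, hk2]
      · rw [hb2, hk2, ← Finsupp.single_add]
    rw [if_neg (fun h => case1 h), if_neg (fun h => case2 h)]
    norm_num
  rw [part1, part2]
  norm_num

lemma sum_D_eq_zero (d0 : Fin N) {A B : Fin N → MvPolynomial (Fin N) ℝ}
    (hsum : (∑ k : Fin N, A k) = ∑ k : Fin N, X k * B k) :
    ∑ ij : Fin N × Fin N, (Ppoly d0 A B ij - X ij * Qpoly d0 B ij) = 0 := by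
  classical
  rw [Finset.sum_sub_distrib, sub_eq_zero]
  have e1 : ∑ ij : Fin N × Fin N, Ppoly d0 A B ij
      = (∑ ij : Fin N × Fin N, lam d0 (A ij.1 * X ij.2 + X ij.1 * A ij.2)) +
        ∑ ij : Fin N × Fin N, ∑ k : Fin N, ∑ j' : Fin N, ∑ b ∈ (B k).support,
          (if cnd d0 k j' b ij then posP d0 B k j' b else 0) := by
    simp only [Ppoly]
    rw [Finset.sum_add_distrib]
  have e2 : ∑ ij : Fin N × Fin N, X ij * Qpoly d0 B ij
      = (∑ ij : Fin N × Fin N, (X ij * l1 d0 (B ij.1) + X ij * l1 d0 (B ij.2))) +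
        ∑ ij : Fin N × Fin N, X ij * ∑ k : Fin N, ∑ j' : Fin N, ∑ b ∈ (B k).support,
          (if cnd d0 k j' b ij then negQ d0 B k j' b else 0) := by
    simp only [Qpoly, mul_add]
    rw [Finset.sum_add_distrib]
  have epos : ∑ ij : Fin N × Fin N, ∑ k : Fin N, ∑ j' : Fin N, ∑ b ∈ (B k).support,
        (if cnd d0 k j' b ij then posP d0 B k j' b else 0)
      = (∑ k : Fin N, ∑ j' : Fin N, ∑ b ∈ (B k).support, posP d0 B k j' b)
        - ∑ k : Fin N, ∑ j' : Fin N, ∑ b ∈ (B k).support,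
            (if j' = k ∧ b = Finsupp.single k 2 then posP d0 B k j' b else 0) := by
    rw [Finset.sum_comm, ← Finset.sum_sub_distrib]
    refine Finset.sum_congr rfl fun k _ => ?_
    rw [Finset.sum_comm, ← Finset.sum_sub_distrib]
    refine Finset.sum_congr rfl fun j' _ => ?_
    rw [Finset.sum_comm, ← Finset.sum_sub_distrib]
    refine Finset.sum_congr rfl fun b _ => ?_
    by_cases hex : j' = k ∧ b = Finsupp.single k 2
    · simp [cnd, hex]
    · simp only [cnd, hex, not_false_iff, and_true, if_neg hex]
      rw [Finset.sum_ite_eq]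
      simp
  have eneg : ∑ ij : Fin N × Fin N, X ij * ∑ k : Fin N, ∑ j' : Fin N, ∑ b ∈ (B k).support,
        (if cnd d0 k j' b ij then negQ d0 B k j' b else 0)
      = (∑ k : Fin N, ∑ j' : Fin N, ∑ b ∈ (B k).support,
          monomial (lamExp d0 (dd3 k j' b)) (2 * (B k).coeff b))
        - ∑ k : Fin N, ∑ j' : Fin N, ∑ b ∈ (B k).support,
            (if j' = k ∧ b = Finsupp.single k 2 then
              monomial (lamExp d0 (dd3 k j' b)) (2 * (B k).coeff b) else 0) := by
    simp only [Finset.mul_sum]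
    rw [Finset.sum_comm, ← Finset.sum_sub_distrib]
    refine Finset.sum_congr rfl fun k _ => ?_
    rw [Finset.sum_comm, ← Finset.sum_sub_distrib]
    refine Finset.sum_congr rfl fun j' _ => ?_
    rw [Finset.sum_comm, ← Finset.sum_sub_distrib]
    refine Finset.sum_congr rfl fun b _ => ?_
    simp only [mul_ite, mul_zero]
    by_cases hex : j' = k ∧ b = Finsupp.single k 2
    · simp [cnd, hex]
    · simp only [cnd, hex, not_false_iff, and_true]
      rw [Finset.sum_ite_eq]
      simp only [Finset.mem_univ, if_true, if_false, sub_zero]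
      rw [negQ, X_mul_monomial'', lamExp]
  have ecorr : ∑ k : Fin N, ∑ j' : Fin N, ∑ b ∈ (B k).support,
        (if j' = k ∧ b = Finsupp.single k 2 then posP d0 B k j' b else 0)
      = ∑ k : Fin N, ∑ j' : Fin N, ∑ b ∈ (B k).support,
          (if j' = k ∧ b = Finsupp.single k 2 then
            monomial (lamExp d0 (dd3 k j' b)) (2 * (B k).coeff b) else 0) := by
    refine Finset.sum_congr rfl fun k _ => Finset.sum_congr rfl fun j' _ =>
      Finset.sum_congr rfl fun b _ => ?_
    split_ifs with h
    swap
    · rfl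
    obtain ⟨h1, h2⟩ := h
    subst h1; subst h2
    rw [posP, pr2_single2, dd3_diag, lamExp_single4, two_mul, map_add]
  have eql1 : ∑ ij : Fin N × Fin N, (X ij * l1 d0 (B ij.1) + X ij * l1 d0 (B ij.2))
      = ∑ k : Fin N, ∑ j' : Fin N, ∑ b ∈ (B k).support, posP d0 B k j' b := by
    rw [Finset.sum_add_distrib]
    have t1 : ∑ ij : Fin N × Fin N, X ij * l1 d0 (B ij.1)
        = ∑ k : Fin N, ∑ j' : Fin N, ∑ b ∈ (B k).support,
            monomial (Finsupp.single ((k, j') : Fin N × Fin N) 1 +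
              Finsupp.single (pr2 d0 b) 1) ((B k).coeff b) := by
      rw [Fintype.sum_prod_type]
      exact Finset.sum_congr rfl fun k _ => Finset.sum_congr rfl fun j' _ => X_mul_l1 d0 _ _
    have t2 : ∑ ij : Fin N × Fin N, X ij * l1 d0 (B ij.2)
        = ∑ k : Fin N, ∑ j' : Fin N, ∑ b ∈ (B k).support,
            monomial (Finsupp.single ((j', k) : Fin N × Fin N) 1 +
              Finsupp.single (pr2 d0 b) 1) ((B k).coeff b) := by
      rw [Fintype.sum_prod_type, Finset.sum_comm]
      exact Finset.sum_congr rfl fun k _ => Finset.sum_congr rfl fun j' _ => X_mul_l1 d0 _ _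
    rw [t1, t2, ← Finset.sum_add_distrib]
    refine Finset.sum_congr rfl fun k _ => ?_
    rw [← Finset.sum_add_distrib]
    refine Finset.sum_congr rfl fun j' _ => ?_
    rw [← Finset.sum_add_distrib]
    exact Finset.sum_congr rfl fun b _ => rfl
  have emain : ∑ ij : Fin N × Fin N, lam d0 (A ij.1 * X ij.2 + X ij.1 * A ij.2)
      = ∑ k : Fin N, ∑ j' : Fin N, ∑ b ∈ (B k).support,
          monomial (lamExp d0 (dd3 k j' b)) (2 * (B k).coeff b) := by
    rw [← lam_sum]
    have hpoly : (∑ ij : Fin N × Fin N, (A ij.1 * X ij.2 + X ij.1 * A ij.2))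
        = ∑ k : Fin N, ∑ j' : Fin N, (X k * X j' * B k + X k * X j' * B k) := by
      have h5 : (∑ a : Fin N, ∑ b : Fin N, X a * (X b * B b))
          = ∑ b : Fin N, ∑ a : Fin N, X a * (X b * B b) := Finset.sum_comm
      calc ∑ ij : Fin N × Fin N, (A ij.1 * X ij.2 + X ij.1 * A ij.2)
          = ∑ i : Fin N, ∑ j : Fin N, (A i * X j + X i * A j) := by
            rw [Fintype.sum_prod_type]
        _ = (∑ i : Fin N, ∑ j : Fin N, A i * X j) +
            ∑ i : Fin N, ∑ j : Fin N, X i * A j := by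
            simp only [Finset.sum_add_distrib]
        _ = (∑ i : Fin N, A i) * (∑ j : Fin N, X j) +
            (∑ i : Fin N, X i) * (∑ j : Fin N, A j) := by
            rw [Finset.sum_mul_sum, Finset.sum_mul_sum]
        _ = (∑ k : Fin N, X k * B k) * (∑ j : Fin N, X j) +
            (∑ i : Fin N, X i) * (∑ k : Fin N, X k * B k) := by rw [hsum]
        _ = (∑ k : Fin N, ∑ j : Fin N, (X k * B k) * X j) +
            ∑ a : Fin N, ∑ b : Fin N, X a * (X b * B b) := by
            rw [Finset.sum_mul_sum, Finset.sum_mul_sum]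
        _ = (∑ k : Fin N, ∑ j : Fin N, (X k * B k) * X j) +
            ∑ b : Fin N, ∑ a : Fin N, X a * (X b * B b) := by rw [h5]
        _ = ∑ k : Fin N, ∑ j' : Fin N, (X k * X j' * B k + X k * X j' * B k) := by
            rw [← Finset.sum_add_distrib]
            refine Finset.sum_congr rfl fun k _ => ?_
            rw [← Finset.sum_add_distrib]
            refine Finset.sum_congr rfl fun j' _ => ?_
            ring
    rw [hpoly, lam_sum]
    refine Finset.sum_congr rfl fun k _ => ?_
    rw [lam_sum]
    refine Finset.sum_congr rfl fun j' _ => ?_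
    rw [lam_add, mul_XX_eq_sum, lam_sum]
    simp only [lam_monomial]
    rw [← Finset.sum_add_distrib]
    refine Finset.sum_congr rfl fun b _ => ?_
    rw [two_mul, map_add]
    rfl
  rw [e1, e2, epos, eneg, ecorr, eql1, emain]
  abel

lemma eval_D (d0 : Fin N) {A B : Fin N → MvPolynomial (Fin N) ℝ}
    (hAhom : ∀ k, (A k).IsHomogeneous 3) (hBhom : ∀ k, (B k).IsHomogeneous 2)
    (y : Fin N → ℝ) (ij : Fin N × Fin N) :
    eval (fun kl : Fin N × Fin N => y kl.1 * y kl.2) (Ppoly d0 A B ij - X ij * Qpoly d0 B ij)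
      = (eval y (A ij.1) - y ij.1 * eval y (B ij.1)) * y ij.2
        + y ij.1 * (eval y (A ij.2) - y ij.2 * eval y (B ij.2)) := by
  classical
  have hq4 : (A ij.1 * X ij.2 + X ij.1 * A ij.2).IsHomogeneous 4 := by
    have ha : (A ij.1 * X ij.2).IsHomogeneous 4 := by
      simpa using (hAhom ij.1).mul (isHomogeneous_X ℝ ij.2)
    have hb : (X ij.1 * A ij.2).IsHomogeneous 4 := by
      simpa using (isHomogeneous_X ℝ ij.1).mul (hAhom ij.2)
    exact ha.add hb
  have h1 : eval (fun kl : Fin N × Fin N => y kl.1 * y kl.2)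
      (lam d0 (A ij.1 * X ij.2 + X ij.1 * A ij.2))
      = eval y (A ij.1) * y ij.2 + y ij.1 * eval y (A ij.2) := by
    rw [eval_lam d0 y hq4]
    simp [map_add, map_mul]
  have h2 : eval (fun kl : Fin N × Fin N => y kl.1 * y kl.2) (l1 d0 (B ij.1))
      = eval y (B ij.1) := eval_l1 d0 y (hBhom ij.1)
  have h3 : eval (fun kl : Fin N × Fin N => y kl.1 * y kl.2) (l1 d0 (B ij.2))
      = eval y (B ij.2) := eval_l1 d0 y (hBhom ij.2)
  have h4 : eval (fun kl : Fin N × Fin N => y kl.1 * y kl.2)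
        (∑ k : Fin N, ∑ j' : Fin N, ∑ b ∈ (B k).support,
          if cnd d0 k j' b ij then posP d0 B k j' b else 0)
      = (y ij.1 * y ij.2) * eval (fun kl : Fin N × Fin N => y kl.1 * y kl.2)
        (∑ k : Fin N, ∑ j' : Fin N, ∑ b ∈ (B k).support,
          if cnd d0 k j' b ij then negQ d0 B k j' b else 0) := by
    simp only [map_sum, Finset.mul_sum]
    refine Finset.sum_congr rfl fun k _ => Finset.sum_congr rfl fun j' _ => ?_
    refine Finset.sum_congr rfl fun b hb => ?_
    split_ifs with hcnd
    swap
    · simp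
    have hbdeg : b.degree = 2 := by
      rw [Finsupp.degree_eq_weight_one]
      exact hBhom k (MvPolynomial.mem_support_iff.1 hb)
    have hdd4 : (dd3 k j' b).degree = 4 := dd3_degree hbdeg
    have hs := deg4_struct d0 hdd4
    have u1 : eval y (monomial (dd3 k j' b) (1:ℝ))
        = y (pr4 d0 (dd3 k j' b)).1.1 * y (pr4 d0 (dd3 k j' b)).1.2 *
          (y (pr4 d0 (dd3 k j' b)).2.1 * y (pr4 d0 (dd3 k j' b)).2.2) := by
      conv_lhs => rw [hs]
      rw [eval_mon_quad]
      ring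
    have u2 : eval y (monomial (dd3 k j' b) (1:ℝ))
        = y k * y j' * (y (pr2 d0 b).1 * y (pr2 d0 b).2) := by
      rw [dd3, eval_mon3]
      have hbs := deg2_pr2 d0 hbdeg
      conv_lhs => rw [hbs]
      rw [eval_mon_pair]
      ring
    have e4 := u1.symm.trans u2
    rw [posP, negQ, map_add, eval_mon_pair, eval_mon_pair, eval_mon_single, ← hcnd.1]
    dsimp only
    linear_combination (-(2 * (B k).coeff b)) * e4
  rw [map_sub, eval_mul, eval_X, Ppoly, Qpoly, map_add, map_add, map_add, h1, h2, h3, h4]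
  ring

end Stage3

open Stage3

/-- Stage 3: a number computed by a TPP-implementable cubic form system on the
probability simplex is computed (as the sum over the marked set
`{(d, j) : j}`) by the self-product PP-implementable quadratic form system
with variables `z_{(i,j)} = y_i · y_j`. -/
theorem stmt_10 (N : ℕ) (hN : 1 ≤ N)
    (C : Fin N → MvPolynomial (Fin N) ℝ)
    (hC : ∀ k : Fin N, ∃ A B : MvPolynomial (Fin N) ℝ,
      (∀ d, 0 ≤ A.coeff d) ∧ (∀ d, 0 ≤ B.coeff d) ∧
      A.IsHomogeneous 3 ∧ B.IsHomogeneous 2 ∧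
      A.coeff (Finsupp.single k 3) = 0 ∧ C k = A - X k * B)
    (hChom : ∀ k : Fin N, (C k).IsHomogeneous 3)
    (hCsum : (∑ k : Fin N, C k) = 0)
    (y : ℝ → (Fin N → ℝ))
    (hode : ∀ t : ℝ, 0 ≤ t → ∀ k : Fin N,
      HasDerivAt (fun t => y t k) (eval (y t) (C k)) t)
    (hpos : ∀ t : ℝ, 0 ≤ t → ∀ k : Fin N, 0 ≤ y t k)
    (hsum : ∀ t : ℝ, 0 ≤ t → (∑ k : Fin N, y t k) = 1)
    (k₀ : Fin N) (hy0 : ∀ k : Fin N, y 0 k = if k = k₀ then 1 else 0)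
    (d : Fin N) (α : ℝ)
    (hlim : Tendsto (fun t => y t d) atTop (nhds α)) :
    ∃ D : Fin N × Fin N → MvPolynomial (Fin N × Fin N) ℝ,
      (∀ ij : Fin N × Fin N, ∃ P Q : MvPolynomial (Fin N × Fin N) ℝ,
        (∀ e, 0 ≤ P.coeff e) ∧ (∀ e, 0 ≤ Q.coeff e) ∧
        P.IsHomogeneous 2 ∧ Q.IsHomogeneous 1 ∧
        P.coeff (Finsupp.single ij 2) = 0 ∧
        D ij = P - X ij * Q) ∧
      (∀ ij : Fin N × Fin N, (D ij).IsHomogeneous 2) ∧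
      (∑ ij : Fin N × Fin N, D ij) = 0 ∧
      (∀ t : ℝ, 0 ≤ t → ∀ ij : Fin N × Fin N,
        HasDerivAt (fun t => y t ij.1 * y t ij.2)
          (eval (fun kl : Fin N × Fin N => y t kl.1 * y t kl.2) (D ij)) t) ∧
      (∀ ij : Fin N × Fin N, y 0 ij.1 * y 0 ij.2 = if ij = (k₀, k₀) then 1 else 0) ∧
      (∀ t : ℝ, 0 ≤ t → ∀ ij : Fin N × Fin N, 0 ≤ y t ij.1 * y t ij.2) ∧
      (∀ t : ℝ, 0 ≤ t → (∑ ij : Fin N × Fin N, y t ij.1 * y t ij.2) = 1) ∧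
      Tendsto (fun t => ∑ j : Fin N, y t d * y t j) atTop (nhds α) := by
  classical
  choose A B hAnn hBnn hAhom hBhom hAc hCeq using hC
  set d0 : Fin N := ⟨0, hN⟩ with hd0
  have hsumAB : (∑ k : Fin N, A k) = ∑ k : Fin N, X k * B k := by
    have h1 : ∑ k : Fin N, (A k - X k * B k) = 0 := by
      rw [← hCsum]
      exact Finset.sum_congr rfl fun k _ => (hCeq k).symm
    rw [Finset.sum_sub_distrib] at h1
    exact sub_eq_zero.1 h1
  refine ⟨fun ij => Ppoly d0 A B ij - X ij * Qpoly d0 B ij, ?_, ?_, ?_, ?_, ?_, ?_, ?_, ?_⟩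
  · intro ij
    exact ⟨Ppoly d0 A B ij, Qpoly d0 B ij,
      Ppoly_coeff_nonneg d0 hAnn hBnn ij,
      Qpoly_coeff_nonneg d0 hBnn ij,
      Ppoly_isHomogeneous d0 A B ij,
      Qpoly_isHomogeneous d0 B ij,
      Ppoly_coeff_single2 d0 hAhom hBhom hAc ij,
      rfl⟩
  · intro ij
    have hp := Ppoly_isHomogeneous d0 A B ij
    have hq := (isHomogeneous_X ℝ ij).mul (Qpoly_isHomogeneous d0 B ij)
    exact hp.sub hq
  · exact sum_D_eq_zero d0 hsumAB
  · intro t ht ij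
    have hd := (hode t ht ij.1).mul (hode t ht ij.2)
    have he : eval (fun kl : Fin N × Fin N => y t kl.1 * y t kl.2)
        (Ppoly d0 A B ij - X ij * Qpoly d0 B ij)
        = eval (y t) (C ij.1) * y t ij.2 + y t ij.1 * eval (y t) (C ij.2) := by
      rw [eval_D d0 hAhom hBhom (y t) ij, hCeq ij.1, hCeq ij.2]
      simp only [map_sub, map_mul, eval_X]
    show HasDerivAt (fun t => y t ij.1 * y t ij.2)
      (eval (fun kl : Fin N × Fin N => y t kl.1 * y t kl.2)
        (Ppoly d0 A B ij - X ij * Qpoly d0 B ij)) t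
    rw [he]
    exact hd
  · intro ij
    rw [hy0 ij.1, hy0 ij.2]
    by_cases h1 : ij.1 = k₀ <;> by_cases h2 : ij.2 = k₀ <;>
      simp [h1, h2, Prod.ext_iff]
  · intro t ht ij
    exact mul_nonneg (hpos t ht ij.1) (hpos t ht ij.2)
  · intro t ht
    rw [Fintype.sum_prod_type]
    simp only [← Finset.mul_sum]
    rw [hsum t ht]
    simp [hsum t ht]
  · have heq : (fun t => ∑ j : Fin N, y t d * y t j) =ᶠ[atTop] fun t => y t d := by
      filter_upwards [eventually_ge_atTop (0:ℝ)] with t ht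
      rw [← Finset.mul_sum, hsum t ht, mul_one]
    exact Tendsto.congr' heq.symm hlim
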